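/- With A_k = (x_k/√10 + y_k + (10+√10)/20)/2 for k ∈ {1,2,3} and φ = 19 + 6√10, the solution sequence satisfies x_{3n+k} = ⌊A_k·√10·φⁿ⌋ and y_{3n+k} = ⌊A_k·φⁿ⌋ for all n ≥ 1. -/

import Mathlib

lemma aux13 (x y : ℕ → ℕ)
    (hrec : ∀ n ≥ 1, x (n + 3) = 19 * x n + 60 * y n + 39 ∧
                     y (n + 3) = 6 * x n + 19 * y n + 12)
    (k : ℕ) (hk : 1 ≤ k) (s : ℝ) (hs2 : s ^ 2 = 10) :
    ∀ n : ℕ,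
      2 * (x (3 * n + k) : ℝ) =
        ((x k : ℝ) + s * (y k) + (1 + s) / 2) * (19 + 6 * s) ^ n
          + ((x k : ℝ) - s * (y k) + (1 - s) / 2) * (19 - 6 * s) ^ n - 1 ∧
      2 * s * (y (3 * n + k) : ℝ) =
        ((x k : ℝ) + s * (y k) + (1 + s) / 2) * (19 + 6 * s) ^ n
          - ((x k : ℝ) - s * (y k) + (1 - s) / 2) * (19 - 6 * s) ^ n - s := by
  intro n
  induction n with
  | zero => simp; constructor <;> ring
  | succ n ih =>
    obtain ⟨ih1, ih2⟩ := ih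
    have hm : 3 * n + k ≥ 1 := by omega
    obtain ⟨h1, h2⟩ := hrec (3 * n + k) hm
    have e1 : 3 * (n + 1) + k = (3 * n + k) + 3 := by ring
    rw [e1, h1, h2]
    push_cast
    constructor
    · linear_combination 19 * ih1 + 6 * s * ih2 + (-12 * ((y (3*n+k) : ℝ)) - 6) * hs2
    · linear_combination 6 * s * ih1 + 19 * ih2

lemma floor13 (x y : ℕ → ℕ)
    (hrec : ∀ n ≥ 1, x (n + 3) = 19 * x n + 60 * y n + 39 ∧
                     y (n + 3) = 6 * x n + 19 * y n + 12)
    (A : ℕ → ℝ)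
    (hA : ∀ k, A k = ((x k : ℝ) / Real.sqrt 10 + (y k : ℝ) + (10 + Real.sqrt 10) / 20) / 2)
    (φ : ℝ) (hφ : φ = 19 + 6 * Real.sqrt 10)
    (k : ℕ) (hk : 1 ≤ k)
    (hD1 : -1 < (x k : ℝ) - Real.sqrt 10 * (y k) + (1 - Real.sqrt 10) / 2)
    (hD2 : (x k : ℝ) - Real.sqrt 10 * (y k) + (1 - Real.sqrt 10) / 2 < 0) :
    ∀ n ≥ 1,
      (x (3 * n + k) : ℤ) = ⌊A k * Real.sqrt 10 * φ ^ n⌋ ∧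
      (y (3 * n + k) : ℤ) = ⌊A k * φ ^ n⌋ := by
  set s : ℝ := Real.sqrt 10 with hsdef
  clear_value s
  have hs2 : s ^ 2 = 10 := by rw [hsdef]; exact Real.sq_sqrt (by norm_num)
  have hspos : (0:ℝ) < s := by rw [hsdef]; exact Real.sqrt_pos.mpr (by norm_num)
  have hs3 : (3:ℝ) < s := by nlinarith
  have hψpos : (0:ℝ) < 19 - 6 * s := by nlinarith
  have hψlt : (19:ℝ) - 6 * s < 1 := by nlinarith
  intro n hn
  set D : ℝ := (x k : ℝ) - s * (y k) + (1 - s) / 2 with hDdef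
  set W : ℝ := (x k : ℝ) + s * (y k) + (1 + s) / 2 with hWdef
  clear_value D W
  obtain ⟨h1, h2⟩ := aux13 x y hrec k hk s hs2 n
  rw [← hDdef, ← hWdef] at h1 h2
  have hψn1 : (0:ℝ) < (19 - 6 * s) ^ n := pow_pos hψpos n
  have hψn2 : (19 - 6 * s) ^ n ≤ 19 - 6 * s := by
    calc (19 - 6 * s) ^ n ≤ (19 - 6 * s) ^ 1 :=
      pow_le_pow_of_le_one (le_of_lt hψpos) (le_of_lt hψlt) hn
    _ = 19 - 6 * s := pow_one _
  have hDn1 : -1 < D * (19 - 6 * s) ^ n := by nlinarith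
  have hDn2 : D * (19 - 6 * s) ^ n < 0 := mul_neg_of_neg_of_pos hD2 hψn1
  have hs0 : s ≠ 0 := ne_of_gt hspos
  have hAs : A k * s = W / 2 := by
    rw [hA k, hWdef]
    field_simp
    ring_nf
    linear_combination 2 * hs2
  have hφn : A k * s * φ ^ n = W / 2 * (19 + 6 * s) ^ n := by rw [hAs, hφ]
  have hAk : A k = W / (2 * s) := by
    field_simp
    linear_combination 2 * hAs
  constructor
  · rw [eq_comm, Int.floor_eq_iff]
    push_cast
    rw [hφn]
    have hx : (x (3 * n + k) : ℝ) = W / 2 * (19 + 6 * s) ^ n + (D * (19 - 6 * s) ^ n - 1) / 2 := by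
      linear_combination h1 / 2
    rw [hx]
    constructor
    · linarith
    · linarith
  · rw [eq_comm, Int.floor_eq_iff]
    push_cast
    rw [hAk, hφ]
    constructor
    · rw [div_mul_eq_mul_div, le_div_iff₀ (by positivity)]
      linarith
    · rw [div_mul_eq_mul_div, div_lt_iff₀ (by positivity)]
      linarith

theorem stmt13 (x y : ℕ → ℕ)
    (hx1 : x 1 = 4) (hy1 : y 1 = 1) (hx2 : x 2 = 20) (hy2 : y 2 = 6)
    (hx3 : x 3 = 39) (hy3 : y 3 = 12)
    (hrec : ∀ n ≥ 1, x (n + 3) = 19 * x n + 60 * y n + 39 ∧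
                     y (n + 3) = 6 * x n + 19 * y n + 12)
    (A : ℕ → ℝ)
    (hA : ∀ k, A k = ((x k : ℝ) / Real.sqrt 10 + (y k : ℝ) + (10 + Real.sqrt 10) / 20) / 2)
    (φ : ℝ) (hφ : φ = 19 + 6 * Real.sqrt 10) :
    ∀ k ∈ ({1, 2, 3} : Set ℕ), ∀ n ≥ 1,
      (x (3 * n + k) : ℤ) = ⌊A k * Real.sqrt 10 * φ ^ n⌋ ∧
      (y (3 * n + k) : ℤ) = ⌊A k * φ ^ n⌋ := by
  have hs2 : (Real.sqrt 10) ^ 2 = 10 := Real.sq_sqrt (by norm_num)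
  have hspos : (0:ℝ) < Real.sqrt 10 := Real.sqrt_pos.mpr (by norm_num)
  intro k hk
  rcases hk with rfl | rfl | rfl
  · exact floor13 x y hrec A hA φ hφ 1 le_rfl
      (by rw [hx1, hy1]; push_cast; nlinarith) (by rw [hx1, hy1]; push_cast; nlinarith)
  · exact floor13 x y hrec A hA φ hφ 2 (by norm_num)
      (by rw [hx2, hy2]; push_cast; nlinarith) (by rw [hx2, hy2]; push_cast; nlinarith)
  · exact floor13 x y hrec A hA φ hφ 3 (by norm_num)
      (by rw [hx3, hy3]; push_cast; nlinarith) (by rw [hx3, hy3]; push_cast; nlinarith)
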